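/- arXiv:1207.4361 — 2 statements merged into one kernel-verified Lean document; each statement's English description precedes it below -/
import Mathlib

section
/- If f is a nonconstant rational function (viewed as a holomorphic map of the Riemann sphere to itself) with critical points z₁,…,z_m of multiplicities v₁,…,v_m, then deg f = 1 + (v₁ + ⋯ + v_m)/2 (Riemann–Hurwitz formula for the sphere). -/
open Polynomial OnePoint

private lemma eval_rev (f : Polynomial ℂ) {z : ℂ} (hz : z ≠ 0) :
    eval z f.reverse = z ^ f.natDegree * eval z⁻¹ f := by
  have : Invertible z⁻¹ := invertibleOfNonzero (inv_ne_zero hz)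
  have h : eval z f.reverse * (z⁻¹) ^ f.natDegree = eval z⁻¹ f := by
    have h0 := Polynomial.eval₂_reverse_mul_pow (RingHom.id ℂ) z⁻¹ f
    rw [invOf_eq_inv, inv_inv] at h0
    exact h0
  rw [← h, inv_pow]
  field_simp

private lemma eval_rev' (f : Polynomial ℂ) (k : ℕ) {z : ℂ} (hz : z ≠ 0) :
    eval z (X ^ k * f.reverse) = z ^ (k + f.natDegree) * eval z⁻¹ f := by
  rw [eval_mul, eval_pow, eval_X, eval_rev f hz, pow_add, mul_assoc]

private lemma eval_deriv_rev (f : Polynomial ℂ) (k : ℕ) {z : ℂ} (hz : z ≠ 0) :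
    eval z (derivative (X ^ k * f.reverse)) =
      ((k + f.natDegree : ℕ) : ℂ) * z ^ (k + f.natDegree - 1) * eval z⁻¹ f
        + z ^ (k + f.natDegree) * (eval z⁻¹ (derivative f) * (-(z ^ 2)⁻¹)) := by
  set N := k + f.natDegree with hN
  have heq : (fun w => eval w (X ^ k * f.reverse)) =ᶠ[nhds z]
      (fun w => w ^ N * eval w⁻¹ f) := by
    filter_upwards [IsOpen.mem_nhds isOpen_compl_singleton
      (by simpa using hz : z ∈ ({0}ᶜ : Set ℂ))] with w hw
    exact eval_rev' f k (by simpa using hw)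
  have hder : HasDerivAt (fun w : ℂ => w ^ N * eval w⁻¹ f)
      ((N : ℂ) * z ^ (N - 1) * eval z⁻¹ f
        + z ^ N * (eval z⁻¹ (derivative f) * (-(z ^ 2)⁻¹))) z :=
    (hasDerivAt_pow N z).mul
      ((f.hasDerivAt z⁻¹).comp z (hasDerivAt_inv hz))
  calc eval z (derivative (X ^ k * f.reverse))
      = deriv (fun w => eval w (X ^ k * f.reverse)) z := by rw [Polynomial.deriv]
    _ = deriv (fun w : ℂ => w ^ N * eval w⁻¹ f) z := heq.deriv_eq
    _ = _ := hder.deriv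

/-- Riemann–Hurwitz formula for a nonconstant rational function `f = P/Q` on the
Riemann sphere.  Finite critical points are counted through the Wronskian
`W = P' Q - P Q'` (the multiplicity of a finite critical point `x` is the root
multiplicity of `x` in `W`), and the multiplicity at `∞` is read off from the
Wronskian of the reversed polynomials `P̃(z) = z^n P(1/z)`, `Q̃(z) = z^n Q(1/z)`.
If `z₁, …, z_m` are exactly the critical points of `f`, with multiplicities
`v₁, …, v_m`, then `deg f = 1 + (v₁ + ⋯ + v_m)/2`. -/
theorem riemann_hurwitz_sphere (P Q : Polynomial ℂ) (hcop : IsCoprime P Q)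
    (hQ : Q ≠ 0) (hnc : 0 < max P.natDegree Q.natDegree)
    (m : ℕ) (z : Fin m → OnePoint ℂ) (hz : Function.Injective z)
    (v : Fin m → ℕ)
    (W : Polynomial ℂ)
    (hW : W = derivative P * Q - P * derivative Q)
    (Pt Qt Wt : Polynomial ℂ)
    (hPt : Pt = X ^ (max P.natDegree Q.natDegree - P.natDegree) * P.reverse)
    (hQt : Qt = X ^ (max P.natDegree Q.natDegree - Q.natDegree) * Q.reverse)
    (hWt : Wt = derivative Pt * Qt - Pt * derivative Qt)
    (ram : OnePoint ℂ → ℕ)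
    (hramFin : ∀ x : ℂ, ram (x : OnePoint ℂ) = rootMultiplicity x W)
    (hramInf : ram ∞ = rootMultiplicity 0 Wt)
    (hcrit : ∀ i, v i = ram (z i) ∧ 0 < v i)
    (hall : ∀ w : OnePoint ℂ, w ∉ Set.range z → ram w = 0) :
    max P.natDegree Q.natDegree = 1 + (∑ i, v i) / 2 := by
  classical
  set n := max P.natDegree Q.natDegree with hn
  have hdPle : P.natDegree ≤ n := le_max_left _ _
  have hdQle : Q.natDegree ≤ n := le_max_right _ _
  have hP : P ≠ 0 := by
    rintro rfl
    have hu : IsUnit Q := isCoprime_zero_left.mp hcop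
    have h0 : Q.natDegree = 0 := natDegree_eq_zero_of_isUnit hu
    rw [hn] at hnc
    simp [h0] at hnc
  -- the Wronskian is nonzero
  have hWne : W ≠ 0 := by
    intro h0
    rw [hW, sub_eq_zero] at h0
    have hPdvd : P ∣ derivative P := by
      refine hcop.dvd_of_dvd_mul_right ?_
      exact h0 ▸ Dvd.intro _ rfl
    have hQdvd : Q ∣ derivative Q := by
      refine hcop.symm.dvd_of_dvd_mul_right ?_
      exact ⟨derivative P, by linear_combination -h0⟩
    have hP' : derivative P = 0 := by
      by_contra h
      exact absurd (degree_le_of_dvd hPdvd h) (not_le.mpr (degree_derivative_lt hP))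
    have hQ' : derivative Q = 0 := by
      by_contra h
      exact absurd (degree_le_of_dvd hQdvd h) (not_le.mpr (degree_derivative_lt hQ))
    have e1 := natDegree_eq_zero_of_derivative_eq_zero hP'
    have e2 := natDegree_eq_zero_of_derivative_eq_zero hQ'
    rw [hn] at hnc
    simp [e1, e2] at hnc
  -- degree bound
  have hwr : W = wronskian Q P := by rw [hW, wronskian]; ring
  have hdeg : W.natDegree < Q.natDegree + P.natDegree := by
    rw [hwr]; exact natDegree_wronskian_lt_add (hwr ▸ hWne)
  have hdWle : W.natDegree ≤ 2 * n := by omega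
  -- key polynomial identity
  have hkey : X ^ 2 * Wt = -(X ^ (2 * n - W.natDegree) * W.reverse) := by
    apply eq_of_infinite_eval_eq
    refine Set.Infinite.mono ?_ ((Set.finite_singleton (0 : ℂ)).infinite_compl)
    intro z0 hz0
    have hz0 : z0 ≠ 0 := by simpa using hz0
    have e1 : eval z0 Pt = z0 ^ n * eval z0⁻¹ P := by
      rw [hPt, eval_rev' P _ hz0, Nat.sub_add_cancel hdPle]
    have e2 : eval z0 Qt = z0 ^ n * eval z0⁻¹ Q := by
      rw [hQt, eval_rev' Q _ hz0, Nat.sub_add_cancel hdQle]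
    have e3 : eval z0 (derivative Pt) =
        (n : ℂ) * z0 ^ (n - 1) * eval z0⁻¹ P
          + z0 ^ n * (eval z0⁻¹ (derivative P) * (-(z0 ^ 2)⁻¹)) := by
      rw [hPt, eval_deriv_rev P _ hz0, Nat.sub_add_cancel hdPle]
    have e4 : eval z0 (derivative Qt) =
        (n : ℂ) * z0 ^ (n - 1) * eval z0⁻¹ Q
          + z0 ^ n * (eval z0⁻¹ (derivative Q) * (-(z0 ^ 2)⁻¹)) := by
      rw [hQt, eval_deriv_rev Q _ hz0, Nat.sub_add_cancel hdQle]
    show eval z0 (X ^ 2 * Wt) = eval z0 (-(X ^ (2 * n - W.natDegree) * W.reverse))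
    rw [eval_neg, eval_rev' W _ hz0, Nat.sub_add_cancel hdWle, eval_mul, eval_pow, eval_X,
      hWt, eval_sub, eval_mul, eval_mul, e1, e2, e3, e4, hW, eval_sub, eval_mul, eval_mul,
      two_mul, pow_add]
    field_simp
    ring
  -- Wt is nonzero
  have hWtne : Wt ≠ 0 := by
    intro h
    rw [h, mul_zero, eq_comm, neg_eq_zero, mul_eq_zero] at hkey
    rcases hkey with h' | h'
    · exact pow_ne_zero _ X_ne_zero h'
    · exact hWne (reverse_eq_zero.mp h')
  -- trailing degree computation
  have hntd : 2 + Wt.natTrailingDegree = 2 * n - W.natDegree := by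
    have h1 : (X ^ 2 * Wt).natTrailingDegree = 2 + Wt.natTrailingDegree := by
      rw [natTrailingDegree_mul (pow_ne_zero _ X_ne_zero) hWtne, natTrailingDegree_X_pow]
    have h2 : (-(X ^ (2 * n - W.natDegree) * W.reverse)).natTrailingDegree
        = 2 * n - W.natDegree := by
      rw [natTrailingDegree_neg,
        natTrailingDegree_mul (pow_ne_zero _ X_ne_zero)
          (by rwa [Ne, reverse_eq_zero]),
        natTrailingDegree_X_pow, natTrailingDegree_reverse, add_zero]
    rw [← h1, hkey, h2]
  have hinf : ram ∞ = Wt.natTrailingDegree := by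
    rw [hramInf, rootMultiplicity_eq_natTrailingDegree']
  -- sum of finite root multiplicities is natDegree W
  have hroots : ∑ x ∈ W.roots.toFinset, rootMultiplicity x W = W.natDegree := by
    have hc : W.roots.card = W.natDegree :=
      splits_iff_card_roots.mp (IsAlgClosed.splits W)
    rw [← hc, ← Multiset.toFinset_sum_count_eq]
    exact Finset.sum_congr rfl fun x _ => (count_roots W).symm
  -- bookkeeping over the Riemann sphere
  set S : Finset (OnePoint ℂ) :=
    insert ∞ (W.roots.toFinset.image ((↑) : ℂ → OnePoint ℂ)) with hS
  have hout : ∀ w ∉ S, ram w = 0 := by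
    intro w hw
    induction w using OnePoint.rec with
    | infty => exact absurd (Finset.mem_insert_self _ _) hw
    | coe x =>
      rw [hramFin]
      by_contra h
      have hroot : x ∈ W.roots.toFinset := by
        rw [Multiset.mem_toFinset, mem_roots hWne]
        exact (rootMultiplicity_pos hWne).mp (Nat.pos_of_ne_zero h)
      exact hw (Finset.mem_insert_of_mem (Finset.mem_image_of_mem _ hroot))
  have hsumv : ∑ i, v i = ∑ w ∈ S, ram w := by
    have h1 : ∑ w ∈ Finset.image z Finset.univ, ram w = ∑ i, v i := by
      rw [Finset.sum_image (fun a _ b _ h => hz h)]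
      exact Finset.sum_congr rfl fun i _ => ((hcrit i).1).symm
    have h2 : ∑ w ∈ Finset.image z Finset.univ, ram w
        = ∑ w ∈ S ∪ Finset.image z Finset.univ, ram w := by
      apply Finset.sum_subset Finset.subset_union_right
      intro w _ hw
      apply hall
      rintro ⟨i, hi⟩
      exact hw (Finset.mem_image.mpr ⟨i, Finset.mem_univ i, hi⟩)
    have h3 : ∑ w ∈ S, ram w = ∑ w ∈ S ∪ Finset.image z Finset.univ, ram w :=
      Finset.sum_subset Finset.subset_union_left fun w _ hw => hout w hw
    rw [← h1, h2, ← h3]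
  have hSsum : ∑ w ∈ S, ram w = ram ∞ + W.natDegree := by
    rw [hS, Finset.sum_insert (by simp)]
    congr 1
    rw [Finset.sum_image (fun a _ b _ h => OnePoint.coe_injective h), ← hroots]
    exact Finset.sum_congr rfl fun x _ => hramFin x
  rw [hsumv, hSsum, hinf]
  omega
end

section
/- Given a sequence of triples (z_i, ν_i, b_i), i=1,…,s, with all z_i ∈ ℂ distinct, at least 3 distinct values among the b_i, Σν_i even, and for each value b the total multiplicity Σ_{b_j = b} ν_j ≤ (Σ_l ν_l)/2, set n = 1 + (Σν_i)/2. Then the kernel of the associated critical evaluation map A on pairs (P,Q) of polynomials of degree ≤ n is at most one-dimensional. -/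
open Polynomial Finset

private lemma aux_dvd_of_derivs {f : ℂ[X]} {a : ℂ} {m : ℕ}
    (h : ∀ l ≤ m, (derivative^[l] f).eval a = 0) : (X - C a) ^ (m + 1) ∣ f := by
  rcases eq_or_ne f 0 with rfl | hf
  · exact dvd_zero _
  · have h1 : m < rootMultiplicity a f :=
      lt_rootMultiplicity_of_isRoot_iterate_derivative hf (fun l hl => h l hl)
    exact (pow_dvd_pow _ h1).trans (pow_rootMultiplicity_dvd f a)

private lemma aux_prod_dvd {s : ℕ} {z : Fin s → ℂ} (hz : Function.Injective z)
    (t : Finset (Fin s)) (m : Fin s → ℕ) {f : ℂ[X]}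
    (h : ∀ i ∈ t, (X - C (z i)) ^ m i ∣ f) :
    (∏ i ∈ t, (X - C (z i)) ^ m i) ∣ f :=
  Finset.prod_dvd_of_coprime
    (fun i _ j _ hij => (Polynomial.pairwise_coprime_X_sub_C hz hij).pow) h

private lemma aux_natDegree_prod {s : ℕ} (z : Fin s → ℂ) (t : Finset (Fin s)) (m : Fin s → ℕ) :
    (∏ i ∈ t, (X - C (z i)) ^ m i).natDegree = ∑ i ∈ t, m i := by
  rw [natDegree_prod]
  · simp [natDegree_pow]
  · intro i _
    exact pow_ne_zero _ (X_sub_C_ne_zero _)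

private lemma aux_factor' {A B : ℂ[X]} (hB : B ≠ 0) :
    ∃ g A₀ B₀ : ℂ[X], g ≠ 0 ∧ IsCoprime A₀ B₀ ∧ A = g * A₀ ∧ B = g * B₀ := by
  have hgne : GCDMonoid.gcd A B ≠ 0 := gcd_ne_zero_of_right hB
  exact ⟨GCDMonoid.gcd A B, A / GCDMonoid.gcd A B, B / GCDMonoid.gcd A B, hgne,
    isCoprime_div_gcd_div_gcd hB,
    (EuclideanDomain.mul_div_cancel' hgne (gcd_dvd_left A B)).symm,
    (EuclideanDomain.mul_div_cancel' hgne (gcd_dvd_right A B)).symm⟩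

private lemma aux_factor {A B : ℂ[X]} (h : A ≠ 0 ∨ B ≠ 0) :
    ∃ g A₀ B₀ : ℂ[X], g ≠ 0 ∧ IsCoprime A₀ B₀ ∧ A = g * A₀ ∧ B = g * B₀ := by
  rcases h with hA | hB
  · obtain ⟨g, B₀, A₀, hg, hcop, hBf, hAf⟩ := aux_factor' (A := B) hA
    exact ⟨g, A₀, B₀, hg, hcop.symm, hAf, hBf⟩
  · exact aux_factor' hB

private lemma aux_deriv_dvd {a : ℂ} {m : ℕ} {f : ℂ[X]} (h : (X - C a) ^ m ∣ f) :
    (X - C a) ^ (m - 1) ∣ derivative f := by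
  obtain ⟨v, rfl⟩ := h
  rw [derivative_mul, derivative_pow]
  refine dvd_add ?_ ?_
  · exact (((dvd_mul_left _ _).mul_right _).mul_right _)
  · exact (pow_dvd_pow _ (Nat.sub_le m 1)).mul_right _

/-- The kernel of the critical evaluation map is at most one-dimensional.
Given admissible data `(z_i, ν_i, b_i)` (distinct `z_i ∈ ℂ`, critical values
`b_i ∈ ℂ ∪ {∞}` — encoded as `Option ℂ` with `none = ∞` — with at least 3
distinct values, `∑ ν_i` even, and each value's total multiplicity at most
`(∑ ν_l)/2`), with `n = 1 + (∑ ν_i)/2`, any two pairs `(P,Q)` and `(p,q)` of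
polynomials of degree at most `n` in the kernel of the critical evaluation map
are proportional. -/
theorem critical_evaluation_kernel_at_most_one_dimensional
    (s : ℕ) (z : Fin s → ℂ) (hz : Function.Injective z)
    (ν : Fin s → ℕ) (b : Fin s → Option ℂ)
    (hb3 : 3 ≤ (Finset.univ.image b).card)
    (heven : Even (∑ i, ν i))
    (hhalf : ∀ i, (∑ j ∈ Finset.univ.filter fun j => b j = b i, ν j) ≤ (∑ l, ν l) / 2)
    (n : ℕ) (hn : n = 1 + (∑ i, ν i) / 2)
    (P Q p q : Polynomial ℂ)
    (hP : P.natDegree ≤ n) (hQ : Q.natDegree ≤ n)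
    (hp : p.natDegree ≤ n) (hq : q.natDegree ≤ n)
    (hker : ∀ i, match b i with
      | some w => ∀ l ≤ ν i,
          (derivative^[l] P).eval (z i) = w * (derivative^[l] Q).eval (z i)
      | none => ∀ l ≤ ν i, (derivative^[l] Q).eval (z i) = 0)
    (hker' : ∀ i, match b i with
      | some w => ∀ l ≤ ν i,
          (derivative^[l] p).eval (z i) = w * (derivative^[l] q).eval (z i)
      | none => ∀ l ≤ ν i, (derivative^[l] q).eval (z i) = 0) :
    ∃ c d : ℂ, (c ≠ 0 ∨ d ≠ 0) ∧ c • P = d • p ∧ c • Q = d • q := by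
  classical
  obtain ⟨M, hM⟩ : ∃ M, ∑ i, ν i = 2 * M := by
    obtain ⟨k, hk⟩ := heven; exact ⟨k, by omega⟩
  have hMn : n = M + 1 := by omega
  have hs3 : 3 ≤ s := by
    have h1 : (Finset.univ.image b).card ≤ s := by
      simpa using Finset.card_image_le (s := (univ : Finset (Fin s))) (f := b)
    omega
  -- Step 1: basic divisibilities from the kernel conditions
  have key : ∀ (A B : ℂ[X]), (∀ i, match b i with
      | some w => ∀ l ≤ ν i,
          (derivative^[l] A).eval (z i) = w * (derivative^[l] B).eval (z i)
      | none => ∀ l ≤ ν i, (derivative^[l] B).eval (z i) = 0) →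
      ∀ i, (X - C (z i)) ^ (ν i + 1) ∣ ((b i).elim B fun w => A - C w * B) := by
    intro A B hk i
    have h := hk i
    rcases hbi : b i with _ | w <;> rw [hbi] at h <;> simp only [hbi, Option.elim]
    · exact aux_dvd_of_derivs h
    · refine aux_dvd_of_derivs (fun l hl => ?_)
      rw [iterate_derivative_sub, iterate_derivative_C_mul, eval_sub, eval_mul, eval_C,
        h l hl, sub_self]
  -- Step 2: P*q - p*Q = 0
  have hW : P * q - p * Q = 0 := by
    by_contra hW0
    have hdvd : ∀ i ∈ (univ : Finset (Fin s)), (X - C (z i)) ^ (ν i + 1) ∣ (P * q - p * Q) := by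
      intro i _
      have h1 := key P Q hker i
      have h2 := key p q hker' i
      rcases hbi : b i with _ | w <;> simp only [hbi, Option.elim] at h1 h2
      · exact dvd_sub (h2.mul_left P) (h1.mul_left p)
      · have heq : P * q - p * Q = (P - C w * Q) * q - (p - C w * q) * Q := by ring
        rw [heq]
        exact dvd_sub (h1.mul_right q) (h2.mul_right Q)
    have hprod := aux_prod_dvd hz univ (fun i => ν i + 1) hdvd
    have hdeg := natDegree_le_of_dvd hprod hW0
    rw [aux_natDegree_prod] at hdeg
    have h1 : ∑ i, (ν i + 1) = 2 * M + s := by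
      rw [Finset.sum_add_distrib, hM]; simp
    have h2 : (P * q - p * Q).natDegree ≤ n + n :=
      (natDegree_sub_le _ _).trans (max_le
        (natDegree_mul_le.trans (add_le_add hP hq))
        (natDegree_mul_le.trans (add_le_add hp hQ)))
    omega
  -- trivial cases
  by_cases hPQ : P = 0 ∧ Q = 0
  · exact ⟨1, 0, Or.inl one_ne_zero, by simp [hPQ.1], by simp [hPQ.2]⟩
  by_cases hpq0 : p = 0 ∧ q = 0
  · exact ⟨0, 1, Or.inr one_ne_zero, by simp [hpq0.1], by simp [hpq0.2]⟩
  rw [not_and_or] at hPQ hpq0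
  -- factorizations
  obtain ⟨g, P₀, Q₀, hg, hcop, hPf, hQf⟩ := aux_factor hPQ
  obtain ⟨h, p₀, q₀, hh, hcop', hpf, hqf⟩ := aux_factor hpq0
  have hPq : P₀ * q₀ = p₀ * Q₀ := by
    have h0 : P * q = p * Q := sub_eq_zero.mp hW
    have h1 : g * h * (P₀ * q₀) = g * h * (p₀ * Q₀) := by
      calc g * h * (P₀ * q₀) = (g * P₀) * (h * q₀) := by ring
        _ = P * q := by rw [← hPf, ← hqf]
        _ = p * Q := h0
        _ = (h * p₀) * (g * Q₀) := by rw [← hpf, ← hQf]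
        _ = g * h * (p₀ * Q₀) := by ring
    exact mul_left_cancel₀ (mul_ne_zero hg hh) h1
  obtain ⟨u, hu, hp₀, hq₀⟩ : ∃ u : ℂ, u ≠ 0 ∧ p₀ = C u * P₀ ∧ q₀ = C u * Q₀ := by
    rcases eq_or_ne P₀ 0 with h0 | h0
    · subst h0
      have hQu : IsUnit Q₀ := isCoprime_zero_left.mp hcop
      have hp₀0 : p₀ = 0 := by
        have h1 : p₀ * Q₀ = 0 := by rw [← hPq]; ring
        exact (mul_eq_zero.mp h1).resolve_right hQu.ne_zero
      subst hp₀0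
      have hqu : IsUnit q₀ := isCoprime_zero_left.mp hcop'
      obtain ⟨γ, hγu, hγ⟩ := Polynomial.isUnit_iff.mp hqu
      obtain ⟨δ, hδu, hδ⟩ := Polynomial.isUnit_iff.mp hQu
      have hδ0 : δ ≠ 0 := hδu.ne_zero
      have hγ0 : γ ≠ 0 := hγu.ne_zero
      refine ⟨γ * δ⁻¹, by simp [hγ0, hδ0], by simp, ?_⟩
      rw [← hγ, ← hδ, ← C_mul]
      congr 1
      field_simp
    · have h1 : P₀ ∣ p₀ := hcop.dvd_of_dvd_mul_right ⟨q₀, hPq.symm⟩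
      have h2 : p₀ ∣ P₀ := hcop'.dvd_of_dvd_mul_right ⟨Q₀, hPq⟩
      obtain ⟨U, hU⟩ := associated_of_dvd_dvd h1 h2
      obtain ⟨r, hru, hrC⟩ := Polynomial.isUnit_iff.mp U.isUnit
      refine ⟨r, hru.ne_zero, by rw [← hU, ← hrC]; ring, ?_⟩
      have h3 : P₀ * q₀ = P₀ * (C r * Q₀) := by
        rw [hPq, ← hU, ← hrC]; ring
      exact mul_left_cancel₀ h0 h3
  set g' : ℂ[X] := C u * h with hg'def
  have hg' : g' ≠ 0 := mul_ne_zero (by simpa using hu) hh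
  have hpf' : p = g' * P₀ := by rw [hpf, hp₀, hg'def]; ring
  have hqf' : q = g' * Q₀ := by rw [hqf, hq₀, hg'def]; ring
  clear hpf hqf hp₀ hq₀ hPq hW hcop' hh
  -- reduction to proportionality of g and g'
  suffices hred : ∃ c d : ℂ, (c ≠ 0 ∨ d ≠ 0) ∧ C c * g = C d * g' by
    obtain ⟨c, d, hcd, hEq⟩ := hred
    refine ⟨c, d, hcd, ?_, ?_⟩ <;> rw [smul_eq_C_mul, smul_eq_C_mul]
    · rw [hPf, hpf', ← mul_assoc, ← mul_assoc, hEq]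
    · rw [hQf, hqf', ← mul_assoc, ← mul_assoc, hEq]
  -- divisibilities in factored form
  set F₀ : Fin s → ℂ[X] := fun i => (b i).elim Q₀ fun w => P₀ - C w * Q₀ with hF₀
  have keyg : ∀ i, (X - C (z i)) ^ (ν i + 1) ∣ g * F₀ i := by
    intro i
    have h1 := key P Q hker i
    rcases hbi : b i with _ | w <;> simp only [hbi, Option.elim, hF₀] at h1 ⊢
    · rwa [← hQf]
    · rw [hPf, hQf] at h1
      have heq : g * P₀ - C w * (g * Q₀) = g * (P₀ - C w * Q₀) := by ring
      rwa [heq] at h1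
  have keyg' : ∀ i, (X - C (z i)) ^ (ν i + 1) ∣ g' * F₀ i := by
    intro i
    have h1 := key p q hker' i
    rcases hbi : b i with _ | w <;> simp only [hbi, Option.elim, hF₀] at h1 ⊢
    · rwa [← hqf']
    · rw [hpf', hqf'] at h1
      have heq : g' * P₀ - C w * (g' * Q₀) = g' * (P₀ - C w * Q₀) := by ring
      rwa [heq] at h1
  set N := max P₀.natDegree Q₀.natDegree with hN
  have hNP : P₀.natDegree ≤ N := le_max_left _ _
  have hNQ : Q₀.natDegree ≤ N := le_max_right _ _
  rcases Nat.eq_zero_or_pos N with hN0 | hN1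
  · -- Case N = 0 : contradiction
    exfalso
    obtain ⟨α, hαC⟩ := natDegree_eq_zero.mp (Nat.le_zero.mp (hN0 ▸ hNP))
    obtain ⟨β, hβC⟩ := natDegree_eq_zero.mp (Nat.le_zero.mp (hN0 ▸ hNQ))
    have hαβ : α ≠ 0 ∨ β ≠ 0 := by
      by_contra hc
      push_neg at hc
      rw [← hαC, ← hβC, hc.1, hc.2, map_zero] at hcop
      exact not_isUnit_zero (M₀ := ℂ[X]) (isCoprime_zero_left.mp hcop)
    set o : Option ℂ := if β = 0 then none else some (α / β) with ho
    have hdvdg : ∀ i, b i ≠ o → (X - C (z i)) ^ (ν i + 1) ∣ g := by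
      intro i hio
      have h1 := keyg i
      rcases hbi : b i with _ | w <;> rw [hbi] at hio <;>
        simp only [hbi, Option.elim, hF₀] at h1
      · have hβ : β ≠ 0 := by
          intro hb0; exact hio (by rw [ho, if_pos hb0])
        rw [← hβC] at h1
        exact (IsUnit.dvd_mul_right (isUnit_C.mpr (isUnit_iff_ne_zero.mpr hβ))).mp h1
      · have hne : α - w * β ≠ 0 := by
          rcases eq_or_ne β 0 with hb0 | hb0
          · have hα : α ≠ 0 := hαβ.resolve_right (by simp [hb0])
            simpa [hb0] using hα
          · intro hc
            apply hio
            rw [ho, if_neg hb0]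
            congr 1
            field_simp
            linear_combination -hc
        have heq : P₀ - C w * Q₀ = C (α - w * β) := by
          rw [← hαC, ← hβC, map_sub, C_mul]
        rw [heq] at h1
        exact (IsUnit.dvd_mul_right (isUnit_C.mpr (isUnit_iff_ne_zero.mpr hne))).mp h1
    set S : Finset (Fin s) := univ.filter (fun i => b i ≠ o) with hS
    have hprod := aux_prod_dvd hz S (fun i => ν i + 1)
      (fun i hi => hdvdg i (Finset.mem_filter.mp hi).2)
    have hdeg := natDegree_le_of_dvd hprod hg
    rw [aux_natDegree_prod] at hdeg
    have hgn : g.natDegree ≤ n := by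
      rcases hPQ with h0 | h0
      · exact le_trans (natDegree_le_of_dvd ⟨P₀, hPf⟩ h0) hP
      · exact le_trans (natDegree_le_of_dvd ⟨Q₀, hQf⟩ h0) hQ
    have hsum : ∑ i ∈ S, (ν i + 1) = (∑ i ∈ S, ν i) + S.card := by
      rw [Finset.sum_add_distrib]; simp
    have hnu : M ≤ ∑ i ∈ S, ν i := by
      have hsplit : (∑ i ∈ univ.filter (fun i => b i ≠ o), ν i)
          + ∑ i ∈ univ.filter (fun i => ¬ b i ≠ o), ν i = 2 * M := by
        rw [Finset.sum_filter_add_sum_filter_not, hM]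
      have hbound : ∑ i ∈ univ.filter (fun i => ¬ b i ≠ o), ν i ≤ M := by
        simp only [not_not]
        rcases em (∃ i₀, b i₀ = o) with ⟨i₀, hi₀⟩ | hno
        · have h1 := hhalf i₀
          rw [hi₀, hM] at h1
          omega
        · push_neg at hno
          rw [Finset.filter_false_of_mem (fun i _ => hno i)]
          simp
      rw [hS]
      omega
    have hcard : 2 ≤ S.card := by
      have h2 : 1 < ((univ.image b).erase o).card := by
        have h3 := Finset.pred_card_le_card_erase (s := univ.image b) (a := o)
        omega
      obtain ⟨v1, hv1, v2, hv2, hvne⟩ := Finset.one_lt_card.mp h2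
      obtain ⟨i1, _, hbi1⟩ := Finset.mem_image.mp (Finset.mem_of_mem_erase hv1)
      obtain ⟨i2, _, hbi2⟩ := Finset.mem_image.mp (Finset.mem_of_mem_erase hv2)
      have hne12 : i1 ≠ i2 := by rintro rfl; exact hvne (hbi1.symm.trans hbi2)
      have hsub : ({i1, i2} : Finset (Fin s)) ⊆ S := by
        intro i hi
        rw [hS, Finset.mem_filter]
        refine ⟨Finset.mem_univ _, ?_⟩
        rcases Finset.mem_insert.mp hi with rfl | hi2'
        · rw [hbi1]; exact Finset.ne_of_mem_erase hv1
        · rw [Finset.mem_singleton.mp hi2', hbi2]; exact Finset.ne_of_mem_erase hv2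
      calc 2 = ({i1, i2} : Finset (Fin s)).card := (Finset.card_pair hne12).symm
        _ ≤ S.card := Finset.card_le_card hsub
    omega
  · -- Case 1 ≤ N
    have hQ₀ : Q₀ ≠ 0 := by
      intro h0
      rw [h0] at hcop
      have h1 := natDegree_eq_zero_of_isUnit (isCoprime_zero_right.mp hcop)
      rw [hN, h0] at hN1
      simp [h1] at hN1
    have hdegg : g.natDegree + N ≤ n := by
      rcases max_cases P₀.natDegree Q₀.natDegree with ⟨hmax, _⟩ | ⟨hmax, _⟩
      · have hP₀ : P₀ ≠ 0 := by
          intro h0; rw [hN, hmax, h0, natDegree_zero] at hN1; omega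
        have h1 := natDegree_mul hg hP₀
        rw [← hPf] at h1
        rw [hN, hmax]
        omega
      · have h1 := natDegree_mul hg hQ₀
        rw [← hQf] at h1
        rw [hN, hmax]
        omega
    have hdegg' : g'.natDegree + N ≤ n := by
      rcases max_cases P₀.natDegree Q₀.natDegree with ⟨hmax, _⟩ | ⟨hmax, _⟩
      · have hP₀ : P₀ ≠ 0 := by
          intro h0; rw [hN, hmax, h0, natDegree_zero] at hN1; omega
        have h1 := natDegree_mul hg' hP₀
        rw [← hpf'] at h1
        rw [hN, hmax]
        omega
      · have h1 := natDegree_mul hg' hQ₀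
        rw [← hqf'] at h1
        rw [hN, hmax]
        omega
    have hF₀ne : ∀ i, F₀ i ≠ 0 := by
      intro i
      rcases hbi : b i with _ | w <;> simp only [hbi, Option.elim, hF₀]
      · exact hQ₀
      · intro h0
        rw [sub_eq_zero] at h0
        have hdvd : Q₀ ∣ P₀ := ⟨C w, by rw [h0]; ring⟩
        have hQu := natDegree_eq_zero_of_isUnit (hcop.isUnit_of_dvd' hdvd dvd_rfl)
        have hPdeg : P₀.natDegree = 0 := by
          rw [h0]
          exact Nat.le_zero.mp (natDegree_mul_le.trans (by simp [natDegree_C, hQu]))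
        rw [hN, hPdeg, hQu] at hN1
        omega
    set e : Fin s → ℕ := fun i => rootMultiplicity (z i) (F₀ i) with he
    have hre : ∀ i, (X - C (z i)) ^ e i ∣ F₀ i := fun i => pow_rootMultiplicity_dvd _ _
    have hgdvd : ∀ (G : ℂ[X]), G ≠ 0 → (∀ i, (X - C (z i)) ^ (ν i + 1) ∣ G * F₀ i) →
        ∀ i, (X - C (z i)) ^ (ν i + 1 - e i) ∣ G := by
      intro G hGne hdvd i
      have h1 : ν i + 1 ≤ rootMultiplicity (z i) (G * F₀ i) :=
        (le_rootMultiplicity_iff (mul_ne_zero hGne (hF₀ne i))).mpr (hdvd i)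
      rw [rootMultiplicity_mul (mul_ne_zero hGne (hF₀ne i))] at h1
      have he2 : e i = rootMultiplicity (z i) (F₀ i) := rfl
      have h2 : ν i + 1 - e i ≤ rootMultiplicity (z i) G := by omega
      exact (pow_dvd_pow _ h2).trans (pow_rootMultiplicity_dvd _ _)
    have hRg := hgdvd g hg keyg
    have hRg' := hgdvd g' hg' keyg'
    -- the Wronskian
    set Wr : ℂ[X] := derivative P₀ * Q₀ - P₀ * derivative Q₀ with hWrdef
    have hWr : Wr ≠ 0 := by
      intro h0
      rw [hWrdef, sub_eq_zero] at h0
      have hQdvd : Q₀ ∣ derivative Q₀ :=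
        hcop.symm.dvd_of_dvd_mul_left ⟨derivative P₀, by rw [← h0]; ring⟩
      rcases eq_or_ne (derivative Q₀) 0 with hd0 | hd0
      · have hQdeg : Q₀.natDegree = 0 := natDegree_eq_zero_of_derivative_eq_zero hd0
        have hPd : derivative P₀ = 0 := by
          have h1 : derivative P₀ * Q₀ = 0 := by rw [h0, hd0, mul_zero]
          exact (mul_eq_zero.mp h1).resolve_right hQ₀
        have hPdeg := natDegree_eq_zero_of_derivative_eq_zero hPd
        rw [hN, hPdeg, hQdeg] at hN1
        omega
      · have h2 := natDegree_le_of_dvd hQdvd hd0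
        have h3 : (derivative Q₀).natDegree ≤ Q₀.natDegree - 1 := natDegree_derivative_le _
        have hQdeg1 : 1 ≤ Q₀.natDegree := by
          by_contra hc
          push_neg at hc
          have h4 : Q₀.natDegree = 0 := by omega
          rw [eq_C_of_natDegree_eq_zero h4, derivative_C] at hd0
          exact hd0 rfl
        omega
    have hWdeg : Wr.natDegree + 1 ≤ 2 * N := by
      have h1 : (derivative P₀ * Q₀).natDegree ≤ (N - 1) + N :=
        natDegree_mul_le.trans
          (add_le_add ((natDegree_derivative_le _).trans (Nat.sub_le_sub_right hNP 1)) hNQ)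
      have h2 : (P₀ * derivative Q₀).natDegree ≤ (N - 1) + N := by
        refine natDegree_mul_le.trans ?_
        have := (natDegree_derivative_le Q₀).trans (Nat.sub_le_sub_right hNQ 1)
        omega
      have h3 : Wr.natDegree ≤ (N - 1) + N := by
        rw [hWrdef]
        exact (natDegree_sub_le _ _).trans (max_le h1 h2)
      omega
    have hWdvd : ∀ i ∈ (univ : Finset (Fin s)), (X - C (z i)) ^ (e i - 1) ∣ Wr := by
      intro i _
      have h1 : (X - C (z i)) ^ (e i - 1) ∣ F₀ i :=
        (pow_dvd_pow _ (Nat.sub_le _ _)).trans (hre i)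
      have h2 : (X - C (z i)) ^ (e i - 1) ∣ derivative (F₀ i) := aux_deriv_dvd (hre i)
      rcases hbi : b i with _ | w
      · have hF : F₀ i = Q₀ := by simp [hF₀, hbi]
        rw [hWrdef, ← hF]
        exact dvd_sub (h1.mul_left _) (h2.mul_left _)
      · have hF : F₀ i = P₀ - C w * Q₀ := by simp [hF₀, hbi]
        have heq : Wr = derivative (F₀ i) * Q₀ - F₀ i * derivative Q₀ := by
          rw [hF, hWrdef, derivative_sub, derivative_C_mul]; ring
        rw [heq]
        exact dvd_sub (h2.mul_right _) (h1.mul_right _)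
    have hsum_d : ∑ i, (e i - 1) ≤ Wr.natDegree := by
      have h1 := natDegree_le_of_dvd (aux_prod_dvd hz univ (fun i => e i - 1) hWdvd) hWr
      rwa [aux_natDegree_prod] at h1
    have hsum_t : 2 * M ≤ (∑ i, (ν i + 1 - e i)) + ∑ i, (e i - 1) := by
      calc 2 * M = ∑ i, ν i := hM.symm
        _ ≤ ∑ i, ((ν i + 1 - e i) + (e i - 1)) := Finset.sum_le_sum (fun i _ => by omega)
        _ = _ := Finset.sum_add_distrib
    have hRdvd_g : (∏ i, (X - C (z i)) ^ (ν i + 1 - e i)) ∣ g :=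
      aux_prod_dvd hz univ _ (fun i _ => hRg i)
    have hRdvd_g' : (∏ i, (X - C (z i)) ^ (ν i + 1 - e i)) ∣ g' :=
      aux_prod_dvd hz univ _ (fun i _ => hRg' i)
    have hRdeg : (∏ i, (X - C (z i)) ^ (ν i + 1 - e i)).natDegree = ∑ i, (ν i + 1 - e i) :=
      aux_natDegree_prod z univ _
    have hRne : (∏ i, (X - C (z i)) ^ (ν i + 1 - e i)) ≠ 0 := by
      apply Finset.prod_ne_zero_iff.mpr
      intro i _
      exact pow_ne_zero _ (X_sub_C_ne_zero _)
    rcases le_or_gt N M with hNM | hNM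
    · -- N ≤ M
      have hT : g.natDegree ≤ ∑ i, (ν i + 1 - e i) ∧
          g'.natDegree ≤ ∑ i, (ν i + 1 - e i) := by
        constructor <;> omega
      obtain ⟨v, hv⟩ := hRdvd_g
      obtain ⟨v', hv'⟩ := hRdvd_g'
      have hvne : v ≠ 0 := by rintro rfl; rw [mul_zero] at hv; exact hg hv
      have hv'ne : v' ≠ 0 := by rintro rfl; rw [mul_zero] at hv'; exact hg' hv'
      have hdv : v.natDegree = 0 := by
        have h1 := natDegree_mul hRne hvne
        rw [← hv, hRdeg] at h1
        omega
      have hdv' : v'.natDegree = 0 := by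
        have h1 := natDegree_mul hRne hv'ne
        rw [← hv', hRdeg] at h1
        omega
      obtain ⟨c₀, hc₀⟩ := natDegree_eq_zero.mp hdv
      obtain ⟨d₀, hd₀⟩ := natDegree_eq_zero.mp hdv'
      have hd₀ne : d₀ ≠ 0 := by
        rintro rfl; rw [map_zero] at hd₀; exact hv'ne hd₀.symm
      refine ⟨d₀, c₀, Or.inl hd₀ne, ?_⟩
      rw [hv, hv', ← hc₀, ← hd₀]
      ring
    · -- M < N : g and g' are constants
      have hgdeg : g.natDegree = 0 := by omega
      have hg'deg : g'.natDegree = 0 := by omega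
      obtain ⟨c₀, hc₀⟩ := natDegree_eq_zero.mp hgdeg
      obtain ⟨d₀, hd₀⟩ := natDegree_eq_zero.mp hg'deg
      have hd₀ne : d₀ ≠ 0 := by
        rintro rfl; rw [map_zero] at hd₀; exact hg' hd₀.symm
      refine ⟨d₀, c₀, Or.inl hd₀ne, ?_⟩
      rw [← hc₀, ← hd₀]
      ring
end
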